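/- Let A₁, A₂ be real symmetric n×n matrices with spectral norms ‖A₁‖₂ ≤ 1 and ‖A₂‖₂ ≤ 1, let ε > 0, and for p ∈ [0,1] write A(p) = p·A₁ + (1−p)·A₂. Let x₁, x₂ ∈ ℝⁿ be unit vectors and let 0 ≤ p₁ ≤ p₂ ≤ 1 satisfy p₂ − p₁ ≤ ε/8, x₁ᵀ A(p₁) x₁ ≥ 3ε/4, x₂ᵀ A(p₂) x₂ ≥ 3ε/4, x₁ᵀ A₁ x₁ ≤ x₁ᵀ A₂ x₁, and x₂ᵀ A₂ x₂ ≤ x₂ᵀ A₁ x₂. Then there exists q ∈ [0,1] such that the matrix X = q·x₁x₁ᵀ + (1−q)·x₂x₂ᵀ is positive semidefinite, has tr(X) ≤ 1, and satisfies A₁ • X ≥ ε/2 and A₂ • X ≥ ε/2. -/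

import Mathlib

open Matrix BigOperators

set_option maxHeartbeats 1000000
set_option synthInstance.maxHeartbeats 400000

noncomputable def frob {m : Type*} [Fintype m] (A X : Matrix m m ℝ) : ℝ :=
  (Aᵀ * X).trace

noncomputable def specNorm {m : Type*} [Fintype m] [DecidableEq m]
    (A : Matrix m m ℝ) : ℝ :=
  ‖Matrix.toEuclideanCLM (𝕜 := ℝ) A‖

noncomputable def euclNorm {m : Type*} [Fintype m] (x : m → ℝ) : ℝ :=
  Real.sqrt (∑ i, x i ^ 2)

lemma sum_sq_eq_one {n : ℕ} {x : Fin n → ℝ} (hx : euclNorm x = 1) :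
    ∑ i, x i ^ 2 = 1 := by
  have h0 : 0 ≤ ∑ i, x i ^ 2 := Finset.sum_nonneg fun i _ => sq_nonneg _
  have := congrArg (· ^ 2) hx
  simpa [euclNorm, Real.sq_sqrt h0] using this

lemma quad_abs_le {n : ℕ} (A : Matrix (Fin n) (Fin n) ℝ) (hA : specNorm A ≤ 1)
    (x : Fin n → ℝ) (hx : euclNorm x = 1) : |x ⬝ᵥ A.mulVec x| ≤ 1 := by
  set x' : EuclideanSpace ℝ (Fin n) := (WithLp.equiv 2 (Fin n → ℝ)).symm x with hx'
  have hnorm : ‖x'‖ = 1 := by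
    rw [EuclideanSpace.norm_eq]
    simp only [hx', WithLp.equiv_symm_apply, PiLp.toLp_apply, Real.norm_eq_abs, sq_abs]
    simpa [euclNorm] using hx
  have hrepr : x ⬝ᵥ A.mulVec x =
      inner ℝ x' (Matrix.toEuclideanCLM (𝕜 := ℝ) A x') := by
    rw [hx', WithLp.equiv_symm_apply, Matrix.toEuclideanCLM_toLp]
    simp [PiLp.inner_apply, dotProduct, mulVec, Matrix.toLin'_apply,
      PiLp.toLp_apply, mul_comm]
  rw [hrepr]
  calc |inner ℝ x' (Matrix.toEuclideanCLM (𝕜 := ℝ) A x')|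
      ≤ ‖x'‖ * ‖Matrix.toEuclideanCLM (𝕜 := ℝ) A x'‖ := abs_real_inner_le_norm _ _
    _ ≤ ‖x'‖ * (‖Matrix.toEuclideanCLM (𝕜 := ℝ) A‖ * ‖x'‖) := by
        exact mul_le_mul_of_nonneg_left ((Matrix.toEuclideanCLM (𝕜 := ℝ) A).le_opNorm x')
          (norm_nonneg _)
    _ ≤ 1 := by rw [hnorm]; simpa [specNorm] using hA

lemma frob_vecMulVec {n : ℕ} (A : Matrix (Fin n) (Fin n) ℝ) (x : Fin n → ℝ) :
    (Aᵀ * vecMulVec x x).trace = x ⬝ᵥ A.mulVec x := by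
  simp only [ Matrix.trace, Matrix.diag, Matrix.mul_apply, Matrix.transpose_apply,
    Matrix.vecMulVec_apply, dotProduct, mulVec, Finset.mul_sum]
  rw [Finset.sum_comm]
  exact Finset.sum_congr rfl fun i _ => Finset.sum_congr rfl fun j _ => by ring

lemma psd_smul {n : ℕ} {M : Matrix (Fin n) (Fin n) ℝ} (hM : M.PosSemidef) {c : ℝ}
    (hc : 0 ≤ c) : (c • M).PosSemidef := by
  refine Matrix.PosSemidef.of_dotProduct_mulVec_nonneg ?_ fun y => ?_
  · unfold Matrix.IsHermitian
    rw [Matrix.conjTranspose_smul, hM.1.eq]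
    simp
  · rw [Matrix.smul_mulVec, dotProduct_smul, smul_eq_mul]
    exact mul_nonneg hc (hM.dotProduct_mulVec_nonneg y)

lemma posSemidef_vecMulVec' {n : ℕ} (x : Fin n → ℝ) :
    (vecMulVec x x).PosSemidef := by
  refine Matrix.PosSemidef.of_dotProduct_mulVec_nonneg ?_ ?_
  · ext i j
    simp [Matrix.conjTranspose_apply, Matrix.vecMulVec_apply, mul_comm]
  · intro y
    have : dotProduct (star y) ((vecMulVec x x) *ᵥ y) = (∑ i, x i * y i) ^ 2 := by
      simp only [dotProduct, mulVec, Matrix.vecMulVec_apply, star_trivial, Finset.mul_sum, sq,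
        Finset.sum_mul]
      exact Finset.sum_congr rfl fun i _ => Finset.sum_congr rfl fun j _ => by ring
    rw [this]; exact sq_nonneg _

/-- the feasible-branch guarantee of the linear-time SDP solver:
the binary-search witnesses combine into a rank-two approximate SDP solution. -/
theorem binary_search_yields_rank_two_solution {n : ℕ}
    (A₁ A₂ : Matrix (Fin n) (Fin n) ℝ) (hA₁s : A₁.IsSymm) (hA₂s : A₂.IsSymm)
    (hA₁ : specNorm A₁ ≤ 1) (hA₂ : specNorm A₂ ≤ 1)
    (ε : ℝ) (hε : 0 < ε)
    (x₁ x₂ : Fin n → ℝ) (hx₁ : euclNorm x₁ = 1) (hx₂ : euclNorm x₂ = 1)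
    (p₁ p₂ : ℝ) (hp₁ : 0 ≤ p₁) (hp₁₂ : p₁ ≤ p₂) (hp₂ : p₂ ≤ 1)
    (hgap : p₂ - p₁ ≤ ε / 8)
    (h₁ : 3 * ε / 4 ≤ x₁ ⬝ᵥ (p₁ • A₁ + (1 - p₁) • A₂).mulVec x₁)
    (h₂ : 3 * ε / 4 ≤ x₂ ⬝ᵥ (p₂ • A₁ + (1 - p₂) • A₂).mulVec x₂)
    (hm₁ : x₁ ⬝ᵥ A₁.mulVec x₁ ≤ x₁ ⬝ᵥ A₂.mulVec x₁)
    (hm₂ : x₂ ⬝ᵥ A₂.mulVec x₂ ≤ x₂ ⬝ᵥ A₁.mulVec x₂) :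
    ∃ q ∈ Set.Icc (0 : ℝ) 1,
      (q • vecMulVec x₁ x₁ + (1 - q) • vecMulVec x₂ x₂).PosSemidef ∧
      (q • vecMulVec x₁ x₁ + (1 - q) • vecMulVec x₂ x₂).trace ≤ 1 ∧
      ε / 2 ≤ frob A₁ (q • vecMulVec x₁ x₁ + (1 - q) • vecMulVec x₂ x₂) ∧
      ε / 2 ≤ frob A₂ (q • vecMulVec x₁ x₁ + (1 - q) • vecMulVec x₂ x₂) := by
  -- abbreviations
  set a₁ := x₁ ⬝ᵥ A₁.mulVec x₁ with ha₁
  set b₁ := x₁ ⬝ᵥ A₂.mulVec x₁ with hb₁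
  set a₂ := x₂ ⬝ᵥ A₁.mulVec x₂ with ha₂
  set b₂ := x₂ ⬝ᵥ A₂.mulVec x₂ with hb₂
  have hdot₁ : x₁ ⬝ᵥ (p₁ • A₁ + (1 - p₁) • A₂).mulVec x₁ = p₁ * a₁ + (1 - p₁) * b₁ := by
    simp [Matrix.add_mulVec, Matrix.smul_mulVec, dotProduct_add, dotProduct_smul,
      smul_eq_mul, ha₁, hb₁]
  have hdot₂ : x₂ ⬝ᵥ (p₂ • A₁ + (1 - p₂) • A₂).mulVec x₂ = p₂ * a₂ + (1 - p₂) * b₂ := by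
    simp [Matrix.add_mulVec, Matrix.smul_mulVec, dotProduct_add, dotProduct_smul,
      smul_eq_mul, ha₂, hb₂]
  rw [hdot₁] at h₁; rw [hdot₂] at h₂
  have hb₁le : |b₁| ≤ 1 := quad_abs_le A₂ hA₂ x₁ hx₁
  have ha₁le : |a₁| ≤ 1 := quad_abs_le A₁ hA₁ x₁ hx₁
  -- value of line 1 at p₂
  have hf₁ : ε / 2 ≤ p₂ * a₁ + (1 - p₂) * b₁ := by
    have h2 : b₁ - a₁ ≤ 2 := by
      have := abs_le.mp hb₁le
      have := abs_le.mp ha₁le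
      linarith [(abs_le.mp hb₁le).2, (abs_le.mp ha₁le).1]
    have key : p₂ * a₁ + (1 - p₂) * b₁ =
        (p₁ * a₁ + (1 - p₁) * b₁) - (p₂ - p₁) * (b₁ - a₁) := by ring
    rw [key]
    have hnn : 0 ≤ b₁ - a₁ := by linarith
    have : (p₂ - p₁) * (b₁ - a₁) ≤ (ε / 8) * 2 := by
      apply mul_le_mul hgap h2 hnn (by positivity)
    linarith
  have hf₂ : ε / 2 ≤ p₂ * a₂ + (1 - p₂) * b₂ := by linarith
  have hεhalf : 0 < ε / 2 := by positivity
  -- a₂ ≥ ε/2 and b₁ ≥ ε/2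
  have ha₂ge : ε / 2 ≤ a₂ := by nlinarith
  have hb₁ge : ε / 2 ≤ b₁ := by nlinarith
  -- choose q
  have main : ∃ q ∈ Set.Icc (0:ℝ) 1,
      ε / 2 ≤ q * a₁ + (1 - q) * a₂ ∧ ε / 2 ≤ q * b₁ + (1 - q) * b₂ := by
    by_cases hcase : ε / 2 ≤ a₁
    · exact ⟨1, ⟨zero_le_one, le_refl 1⟩, by linarith, by linarith⟩
    · push_neg at hcase
      -- then p₂ < 1
      have hp₂lt : p₂ < 1 := by
        by_contra h
        push_neg at h
        have : p₂ = 1 := le_antisymm hp₂ h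
        rw [this] at hf₁; simp at hf₁; linarith
      have hden : 0 < a₂ - a₁ := by linarith
      set q := (a₂ - ε / 2) / (a₂ - a₁) with hq
      have hq0 : 0 ≤ q := div_nonneg (by linarith) (le_of_lt hden)
      have hq1 : q ≤ 1 := by
        rw [div_le_one hden]; linarith
      have hu : q * a₁ + (1 - q) * a₂ = ε / 2 := by
        rw [hq]
        field_simp
        ring
      refine ⟨q, ⟨hq0, hq1⟩, le_of_eq hu.symm, ?_⟩
      -- p₂ * u(q) + (1-p₂) * v(q) ≥ ε/2 with u(q) = ε/2
      have hcomb : ε / 2 ≤ p₂ * (q * a₁ + (1 - q) * a₂) + (1 - p₂) * (q * b₁ + (1 - q) * b₂) := by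
        have : p₂ * (q * a₁ + (1 - q) * a₂) + (1 - p₂) * (q * b₁ + (1 - q) * b₂) =
            q * (p₂ * a₁ + (1 - p₂) * b₁) + (1 - q) * (p₂ * a₂ + (1 - p₂) * b₂) := by ring
        rw [this]
        have := mul_le_mul_of_nonneg_left hf₁ hq0
        have := mul_le_mul_of_nonneg_left hf₂ (by linarith : (0:ℝ) ≤ 1 - q)
        nlinarith
      rw [hu] at hcomb
      have h1p : 0 < 1 - p₂ := by linarith
      nlinarith
  obtain ⟨q, hqmem, hA1q, hA2q⟩ := main
  refine ⟨q, hqmem, ?_, ?_, ?_, ?_⟩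
  · exact (psd_smul (posSemidef_vecMulVec' x₁) hqmem.1).add
      (psd_smul (posSemidef_vecMulVec' x₂) (by linarith [hqmem.2] : (0:ℝ) ≤ 1 - q))
  · have t₁ : (vecMulVec x₁ x₁).trace = 1 := by
      simp only [Matrix.trace, Matrix.diag, Matrix.vecMulVec_apply]
      simpa [sq] using sum_sq_eq_one hx₁
    have t₂ : (vecMulVec x₂ x₂).trace = 1 := by
      simp only [Matrix.trace, Matrix.diag, Matrix.vecMulVec_apply]
      simpa [sq] using sum_sq_eq_one hx₂
    rw [Matrix.trace_add, Matrix.trace_smul, Matrix.trace_smul, t₁, t₂]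
    simp
  · have : frob A₁ (q • vecMulVec x₁ x₁ + (1 - q) • vecMulVec x₂ x₂) =
        q * a₁ + (1 - q) * a₂ := by
      simp only [frob, Matrix.mul_add, Matrix.mul_smul, Matrix.trace_add, Matrix.trace_smul,
        smul_eq_mul, frob_vecMulVec]
      rfl

    rw [this]; exact hA1q
  · have : frob A₂ (q • vecMulVec x₁ x₁ + (1 - q) • vecMulVec x₂ x₂) =
        q * b₁ + (1 - q) * b₂ := by
      simp only [frob, Matrix.mul_add, Matrix.mul_smul, Matrix.trace_add, Matrix.trace_smul,
        smul_eq_mul, frob_vecMulVec]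
      rfl

    rw [this]; exact hA2q
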